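/- Let A be a commutative k-algebra and λ ∈ k. The k-module A^ℕ of functions ℕ → A equipped with the λ-Hurwitz product (fg)(n) = Σ_{k=0}^{n} Σ_{j=0}^{n-k} binom(n,k)·binom(n-k,j)·λ^k·f(n-j)·g(k+j) is a commutative k-algebra with identity (the function sending 0 to 1 and all n > 0 to 0). -/

import Mathlib

open Finset

/-- The `λ`-Hurwitz product over a `k`-module `M` with respect to a
multiplication `mul`. -/
def hmulG {k M : Type*} [CommRing k] [AddCommMonoid M] [Module k M]
    (lam : k) (mul : M → M → M) (f g : ℕ → M) : ℕ → M :=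
  fun n => ∑ i ∈ range (n + 1), ∑ j ∈ range (n - i + 1),
    (n.choose i * (n - i).choose j) • (lam ^ i • mul (f (n - j)) (g (i + j)))

/-- The `λ`-Hurwitz product on `A^ℕ` for a commutative `k`-algebra `A`. -/
def hmul {k A : Type*} [CommRing k] [CommRing A] [Algebra k A] (lam : k)
    (f g : ℕ → A) : ℕ → A :=
  hmulG lam (· * ·) f g

/-- The identity of the `λ`-Hurwitz series algebra. -/
def hone {A : Type*} [CommRing A] : ℕ → A := fun n => if n = 0 then 1 else 0

/-- The shift operator `∂_A`. -/
def hshift {A : Type*} (f : ℕ → A) : ℕ → A := fun n => f (n + 1)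

/-- The comultiplication-type map `δ_A`. -/
def hdel {M : Type*} (f : ℕ → M) : ℕ → ℕ → M := fun m n => f (m + n)

section HurwitzAux

variable {k A : Type*} [CommRing k] [CommRing A] [Algebra k A] (lam : k)

lemma hmul_def (f g : ℕ → A) (n : ℕ) :
    hmul lam f g n = ∑ i ∈ range (n + 1), ∑ j ∈ range (n - i + 1),
      (n.choose i * (n - i).choose j) • (lam ^ i • (f (n - j) * g (i + j))) := rfl

lemma hmul_eq_ring (f g : ℕ → A) (n : ℕ) :
    hmul lam f g n = ∑ i ∈ range (n + 1), ∑ j ∈ range (n - i + 1),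
      ((n.choose i * (n - i).choose j : ℕ) : A) * (algebraMap k A lam) ^ i
        * f (n - j) * g (i + j) := by
  rw [hmul_def]
  refine sum_congr rfl fun i _ => sum_congr rfl fun j _ => ?_
  simp only [Algebra.smul_def, map_pow, eq_natCast]
  ring

lemma hmul_comm (f g : ℕ → A) : hmul lam f g = hmul lam g f := by
  funext n
  rw [hmul_eq_ring, hmul_eq_ring]
  refine sum_congr rfl fun i hi => ?_
  rw [← Finset.sum_range_reflect]
  refine sum_congr rfl fun j hj => ?_
  simp only [mem_range] at hi hj
  have e1 : n - i + 1 - 1 - j = n - i - j := by omega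
  rw [e1]
  have e2 : n - (n - i - j) = i + j := by omega
  have e3 : i + (n - i - j) = n - j := by omega
  have e4 : (n - i).choose (n - i - j) = (n - i).choose j := by
    have : j ≤ n - i := by omega
    rw [Nat.choose_symm this]
  rw [e2, e3, e4]
  ring

lemma hmul_hone_right (f : ℕ → A) : hmul lam f hone = f := by
  funext n
  rw [hmul_eq_ring]
  rw [Finset.sum_eq_single 0]
  · rw [Finset.sum_eq_single 0]
    · simp [hone]
    · intro j hj hne
      simp [hone, hne]
    · intro h
      simp at h
  · intro i hi hne
    refine Finset.sum_eq_zero fun j hj => ?_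
    have : i + j ≠ 0 := by omega
    simp [hone, this, hne]
  · intro h
    simp at h

lemma hmul_hone_left (f : ℕ → A) : hmul lam hone f = f := by
  rw [hmul_comm lam, hmul_hone_right]

lemma hmul_add_right (f g h : ℕ → A) :
    hmul lam f (g + h) = hmul lam f g + hmul lam f h := by
  funext n
  simp only [Pi.add_apply, hmul_eq_ring, mul_add, Finset.sum_add_distrib]

lemma hmul_add_left (f g h : ℕ → A) :
    hmul lam (f + g) h = hmul lam f h + hmul lam g h := by
  rw [hmul_comm lam, hmul_add_right, hmul_comm lam h f, hmul_comm lam h g]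

lemma hmul_smul_right (c : k) (f g : ℕ → A) :
    hmul lam f (c • g) = c • hmul lam f g := by
  funext n
  rw [hmul_eq_ring, Pi.smul_apply, hmul_eq_ring, Finset.smul_sum]
  refine sum_congr rfl fun i _ => ?_
  rw [Finset.smul_sum]
  refine sum_congr rfl fun j _ => ?_
  simp only [Pi.smul_apply, Algebra.smul_def]
  ring

lemma hmul_smul_left (c : k) (f g : ℕ → A) :
    hmul lam (c • f) g = c • hmul lam f g := by
  rw [hmul_comm lam, hmul_smul_right, hmul_comm lam]

lemma hcore (a : A) (f g : ℕ → A) (n : ℕ) :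
    (∑ i ∈ range (n + 1 + 1), ∑ j ∈ range (n + 1 - i + 1),
        (((n + 1).choose i * (n + 1 - i).choose j : ℕ) : A) * a ^ i * f (n + 1 - j) * g (i + j))
      = (∑ i ∈ range (n + 1), ∑ j ∈ range (n - i + 1),
          ((n.choose i * (n - i).choose j : ℕ) : A) * a ^ i * f (n - j + 1) * g (i + j))
        + (∑ i ∈ range (n + 1), ∑ j ∈ range (n - i + 1),
          ((n.choose i * (n - i).choose j : ℕ) : A) * a ^ i * f (n - j) * g (i + j + 1))
        + a * ∑ i ∈ range (n + 1), ∑ j ∈ range (n - i + 1),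
          ((n.choose i * (n - i).choose j : ℕ) : A) * a ^ i * f (n - j + 1) * g (i + j + 1) := by
  have h1 : (∑ i ∈ range (n + 1 + 1), ∑ j ∈ range (n + 1 - i + 1),
        (((n + 1).choose i * (n + 1 - i).choose j : ℕ) : A) * a ^ i * f (n + 1 - j) * g (i + j))
      = (∑ i ∈ range (n + 1), ∑ j ∈ range (n + 1 - (i + 1) + 1),
          (((n + 1).choose (i + 1) * (n + 1 - (i + 1)).choose j : ℕ) : A) * a ^ (i + 1)
            * f (n + 1 - j) * g (i + 1 + j))
        + ∑ j ∈ range (n + 1 - 0 + 1),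
            (((n + 1).choose 0 * (n + 1 - 0).choose j : ℕ) : A) * a ^ 0 * f (n + 1 - j) * g (0 + j) :=
    Finset.sum_range_succ' _ _
  have h2 : (∑ i ∈ range (n + 1), ∑ j ∈ range (n + 1 - (i + 1) + 1),
        (((n + 1).choose (i + 1) * (n + 1 - (i + 1)).choose j : ℕ) : A) * a ^ (i + 1)
          * f (n + 1 - j) * g (i + 1 + j))
      = (∑ i ∈ range (n + 1), ∑ j ∈ range (n - i + 1),
          ((n.choose (i + 1) * (n - i).choose j : ℕ) : A) * a ^ (i + 1) * f (n + 1 - j) * g (i + 1 + j))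
        + (∑ i ∈ range (n + 1), ∑ j ∈ range (n - i + 1),
          ((n.choose i * (n - i).choose j : ℕ) : A) * a ^ (i + 1) * f (n + 1 - j) * g (i + 1 + j)) := by
    rw [← Finset.sum_add_distrib]
    refine sum_congr rfl fun i hi => ?_
    have e : n + 1 - (i + 1) = n - i := by omega
    rw [e, ← Finset.sum_add_distrib]
    refine sum_congr rfl fun j hj => ?_
    rw [Nat.choose_succ_succ]
    push_cast
    ring
  have h3 : (∑ i ∈ range (n + 1), ∑ j ∈ range (n - i + 1),
        ((n.choose i * (n - i).choose j : ℕ) : A) * a ^ (i + 1) * f (n + 1 - j) * g (i + 1 + j))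
      = a * ∑ i ∈ range (n + 1), ∑ j ∈ range (n - i + 1),
          ((n.choose i * (n - i).choose j : ℕ) : A) * a ^ i * f (n - j + 1) * g (i + j + 1) := by
    rw [Finset.mul_sum]
    refine sum_congr rfl fun i hi => ?_
    rw [Finset.mul_sum]
    refine sum_congr rfl fun j hj => ?_
    simp only [mem_range] at hi hj
    have e1 : n + 1 - j = n - j + 1 := by omega
    have e2 : i + 1 + j = i + j + 1 := by omega
    rw [e1, e2, pow_succ]
    ring
  -- the sum with the auxiliary kernel G i
  have h4 : (∑ i ∈ range (n + 1 + 1), ∑ j ∈ range (n + 1 - i + 1),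
        ((n.choose i * (n + 1 - i).choose j : ℕ) : A) * a ^ i * f (n + 1 - j) * g (i + j))
      = (∑ i ∈ range (n + 1), ∑ j ∈ range (n - i + 1),
          ((n.choose (i + 1) * (n - i).choose j : ℕ) : A) * a ^ (i + 1) * f (n + 1 - j) * g (i + 1 + j))
        + ∑ j ∈ range (n + 1 - 0 + 1),
            (((n + 1).choose 0 * (n + 1 - 0).choose j : ℕ) : A) * a ^ 0 * f (n + 1 - j) * g (0 + j) := by
    calc (∑ i ∈ range (n + 1 + 1), ∑ j ∈ range (n + 1 - i + 1),
        ((n.choose i * (n + 1 - i).choose j : ℕ) : A) * a ^ i * f (n + 1 - j) * g (i + j))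
        = (∑ i ∈ range (n + 1), ∑ j ∈ range (n + 1 - (i + 1) + 1),
            ((n.choose (i + 1) * (n + 1 - (i + 1)).choose j : ℕ) : A) * a ^ (i + 1)
              * f (n + 1 - j) * g (i + 1 + j))
          + ∑ j ∈ range (n + 1 - 0 + 1),
              ((n.choose 0 * (n + 1 - 0).choose j : ℕ) : A) * a ^ 0 * f (n + 1 - j) * g (0 + j) :=
        Finset.sum_range_succ' _ _
      _ = _ := by
        congr 1
        · refine sum_congr rfl fun i hi => ?_
          have e : n + 1 - (i + 1) = n - i := by omega
          rw [e]
        · refine sum_congr rfl fun j hj => ?_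
          norm_num
  have h5 : (∑ i ∈ range (n + 1 + 1), ∑ j ∈ range (n + 1 - i + 1),
        ((n.choose i * (n + 1 - i).choose j : ℕ) : A) * a ^ i * f (n + 1 - j) * g (i + j))
      = ∑ i ∈ range (n + 1), ∑ j ∈ range (n + 1 - i + 1),
        ((n.choose i * (n + 1 - i).choose j : ℕ) : A) * a ^ i * f (n + 1 - j) * g (i + j) := by
    rw [Finset.sum_range_succ]
    simp [Nat.choose_succ_self]
  have h6 : ∀ i ∈ range (n + 1), (∑ j ∈ range (n + 1 - i + 1),
        ((n.choose i * (n + 1 - i).choose j : ℕ) : A) * a ^ i * f (n + 1 - j) * g (i + j))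
      = (∑ j ∈ range (n - i + 1),
          ((n.choose i * (n - i).choose j : ℕ) : A) * a ^ i * f (n - j + 1) * g (i + j))
        + ∑ j ∈ range (n - i + 1),
          ((n.choose i * (n - i).choose j : ℕ) : A) * a ^ i * f (n - j) * g (i + j + 1) := by
    intro i hi
    simp only [mem_range] at hi
    have e : n + 1 - i = n - i + 1 := by omega
    rw [e]
    have hpeel : (∑ j ∈ range (n - i + 1 + 1),
          ((n.choose i * (n - i + 1).choose j : ℕ) : A) * a ^ i * f (n + 1 - j) * g (i + j))
        = (∑ j ∈ range (n - i + 1),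
            ((n.choose i * (n - i + 1).choose (j + 1) : ℕ) : A) * a ^ i * f (n + 1 - (j + 1)) * g (i + (j + 1)))
          + ((n.choose i * (n - i + 1).choose 0 : ℕ) : A) * a ^ i * f (n + 1 - 0) * g (i + 0) :=
      Finset.sum_range_succ' _ _
    rw [hpeel]
    have hT : ∀ j ∈ range (n - i + 1),
        ((n.choose i * (n - i + 1).choose (j + 1) : ℕ) : A) * a ^ i * f (n + 1 - (j + 1)) * g (i + (j + 1))
        = ((n.choose i * (n - i).choose j : ℕ) : A) * a ^ i * f (n - j) * g (i + j + 1)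
          + ((n.choose i * (n - i).choose (j + 1) : ℕ) : A) * a ^ i * f (n - j) * g (i + j + 1) := by
      intro j hj
      simp only [mem_range] at hj
      have e1 : n + 1 - (j + 1) = n - j := by omega
      have e2 : i + (j + 1) = i + j + 1 := by omega
      rw [e1, e2, Nat.choose_succ_succ]
      push_cast
      ring
    rw [Finset.sum_congr rfl hT, Finset.sum_add_distrib]
    have hExtra : (∑ j ∈ range (n - i + 1),
          ((n.choose i * (n - i).choose (j + 1) : ℕ) : A) * a ^ i * f (n - j) * g (i + j + 1))
        = ∑ j ∈ range (n - i),
          ((n.choose i * (n - i).choose (j + 1) : ℕ) : A) * a ^ i * f (n - j) * g (i + j + 1) := by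
      rw [Finset.sum_range_succ]
      simp [Nat.choose_succ_self]
    have hA : (∑ j ∈ range (n - i + 1),
          ((n.choose i * (n - i).choose j : ℕ) : A) * a ^ i * f (n - j + 1) * g (i + j))
        = (∑ j ∈ range (n - i),
            ((n.choose i * (n - i).choose (j + 1) : ℕ) : A) * a ^ i * f (n - j) * g (i + j + 1))
          + ((n.choose i * (n - i).choose 0 : ℕ) : A) * a ^ i * f (n - 0 + 1) * g (i + 0) := by
      calc (∑ j ∈ range (n - i + 1),
            ((n.choose i * (n - i).choose j : ℕ) : A) * a ^ i * f (n - j + 1) * g (i + j))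
          = (∑ j ∈ range (n - i),
              ((n.choose i * (n - i).choose (j + 1) : ℕ) : A) * a ^ i * f (n - (j + 1) + 1) * g (i + (j + 1)))
            + ((n.choose i * (n - i).choose 0 : ℕ) : A) * a ^ i * f (n - 0 + 1) * g (i + 0) :=
          Finset.sum_range_succ' _ _
        _ = _ := by
          congr 1
          refine sum_congr rfl fun j hj => ?_
          simp only [mem_range] at hj
          have e1 : n - (j + 1) + 1 = n - j := by omega
          have e2 : i + (j + 1) = i + j + 1 := by omega
          rw [e1, e2]
    rw [hExtra, hA]
    have : ((n.choose i * (n - i + 1).choose 0 : ℕ) : A) * a ^ i * f (n + 1 - 0) * g (i + 0)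
        = ((n.choose i * (n - i).choose 0 : ℕ) : A) * a ^ i * f (n - 0 + 1) * g (i + 0) := by
      norm_num
    rw [this]
    ring
  have h7 : (∑ i ∈ range (n + 1), ∑ j ∈ range (n - i + 1),
        ((n.choose (i + 1) * (n - i).choose j : ℕ) : A) * a ^ (i + 1) * f (n + 1 - j) * g (i + 1 + j))
      + (∑ j ∈ range (n + 1 - 0 + 1),
          (((n + 1).choose 0 * (n + 1 - 0).choose j : ℕ) : A) * a ^ 0 * f (n + 1 - j) * g (0 + j))
      = (∑ i ∈ range (n + 1), ∑ j ∈ range (n - i + 1),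
          ((n.choose i * (n - i).choose j : ℕ) : A) * a ^ i * f (n - j + 1) * g (i + j))
        + ∑ i ∈ range (n + 1), ∑ j ∈ range (n - i + 1),
          ((n.choose i * (n - i).choose j : ℕ) : A) * a ^ i * f (n - j) * g (i + j + 1) := by
    rw [← h4, h5, Finset.sum_congr rfl h6, Finset.sum_add_distrib]
  rw [h1, h2, h3]
  rw [add_right_comm] at *
  rw [h7]

lemma hmul_shift (f g : ℕ → A) (n : ℕ) :
    hmul lam f g (n + 1) =
      hmul lam (hshift f) g n + hmul lam f (hshift g) n +
        lam • hmul lam (hshift f) (hshift g) n := by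
  rw [hmul_eq_ring, hmul_eq_ring, hmul_eq_ring, hmul_eq_ring, Algebra.smul_def]
  have := hcore (algebraMap k A lam) f g n
  simp only [hshift]
  convert this using 2

lemma hmul_zero_apply (f g : ℕ → A) : hmul lam f g 0 = f 0 * g 0 := by
  simp [hmul_def]

lemma hshift_hmul (f g : ℕ → A) :
    hshift (hmul lam f g) =
      hmul lam (hshift f) g + hmul lam f (hshift g) +
        lam • hmul lam (hshift f) (hshift g) := by
  funext n
  exact hmul_shift lam f g n

lemma hmul_assoc (f g h : ℕ → A) :
    hmul lam (hmul lam f g) h = hmul lam f (hmul lam g h) := by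
  have key : ∀ n, ∀ f g h : ℕ → A,
      hmul lam (hmul lam f g) h n = hmul lam f (hmul lam g h) n := by
    intro n
    induction n with
    | zero =>
      intro f g h
      simp [hmul_zero_apply, mul_assoc]
    | succ n ih =>
      intro f g h
      rw [hmul_shift, hmul_shift, hshift_hmul, hshift_hmul]
      simp only [hmul_add_left, hmul_add_right, hmul_smul_left, hmul_smul_right,
        Pi.add_apply, Pi.smul_apply, smul_add, ih]
      simp only [Algebra.smul_def]
      ring
  funext n
  exact key n f g h

end HurwitzAux

/-- `A^ℕ` with the `λ`-Hurwitz product is a commutative `k`-algebra with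
identity `hone` (the underlying `k`-module structure being pointwise). -/
theorem hurwitz_is_comm_algebra {k A : Type*} [CommRing k] [CommRing A]
    [Algebra k A] (lam : k) :
    (∀ f g : ℕ → A, hmul lam f g = hmul lam g f) ∧
    (∀ f g h : ℕ → A, hmul lam (hmul lam f g) h = hmul lam f (hmul lam g h)) ∧
    (∀ f g h : ℕ → A, hmul lam f (g + h) = hmul lam f g + hmul lam f h) ∧
    (∀ f g h : ℕ → A, hmul lam (f + g) h = hmul lam f h + hmul lam g h) ∧
    (∀ f : ℕ → A, hmul lam hone f = f) ∧
    (∀ f : ℕ → A, hmul lam f hone = f) ∧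
    (∀ (c : k) (f g : ℕ → A), hmul lam (c • f) g = c • hmul lam f g) ∧
    (∀ (c : k) (f g : ℕ → A), hmul lam f (c • g) = c • hmul lam f g) := by
  exact ⟨hmul_comm lam, hmul_assoc lam, hmul_add_right lam, fun f g h => hmul_add_left lam f g h,
    hmul_hone_left lam, hmul_hone_right lam, hmul_smul_left lam, hmul_smul_right lam⟩
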